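/- arXiv:2206.14266 — 4 statements merged into one kernel-verified Lean document; each statement's English description precedes it below -/
import Mathlib

section
/- Let T ∈ B(H) and suppose λ, μ ∈ ℂ satisfy: for every ε > 0 and every finite-codimensional subspace M of H there exist unit vectors x, y ∈ M with x ⊥ y, |⟨Tx,x⟩ − λ| < ε and |⟨Ty,y⟩ − μ| < ε. Let 0 < C < |λ − μ|. Then for every finite-codimensional closed subspace M ⊆ H there exist vectors v, z ∈ M with ‖v‖·‖z‖ ≤ 2√2/C, v ⊥ z, and ⟨Tv, z⟩ = 1. -/
open ComplexConjugate

/-- Lemma 4.1: if λ, μ are approximately attained diagonal values of T on every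
finite-codimensional subspace (by suitably orthogonal unit vectors), and 0 < C < |λ − μ|,
then every closed finite-codimensional subspace M contains v, z with ‖v‖‖z‖ ≤ 2√2/C,
v ⊥ z and ⟨Tv, z⟩ = 1. -/
theorem stmt4 {H : Type*} [NormedAddCommGroup H] [InnerProductSpace ℂ H] [CompleteSpace H]
    (T : H →L[ℂ] H) (lam mu : ℂ) (C : ℝ)
    (hC0 : 0 < C) (hC : C < ‖lam - mu‖)
    (h : ∀ ε > (0 : ℝ), ∀ M : Submodule ℂ H, IsClosed (M : Set H) →
      FiniteDimensional ℂ (H ⧸ M) →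
      ∃ x y : H, x ∈ M ∧ y ∈ M ∧ T x ∈ M ∧ T y ∈ M ∧ ‖x‖ = 1 ∧ ‖y‖ = 1 ∧
        (inner ℂ x y : ℂ) = 0 ∧ (inner ℂ (T x) y : ℂ) = 0 ∧
        (inner ℂ ((ContinuousLinearMap.adjoint T) x) y : ℂ) = 0 ∧
        ‖(inner ℂ x (T x) : ℂ) - lam‖ < ε ∧
        ‖(inner ℂ y (T y) : ℂ) - mu‖ < ε)
    (M : Submodule ℂ H) (hMc : IsClosed (M : Set H)) (hMf : FiniteDimensional ℂ (H ⧸ M)) :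
    ∃ v z : H, v ∈ M ∧ z ∈ M ∧ ‖v‖ * ‖z‖ ≤ 2 * Real.sqrt 2 / C ∧
      (inner ℂ v z : ℂ) = 0 ∧ (inner ℂ z (T v) : ℂ) = 1 := by
  set ε : ℝ := (‖lam - mu‖ - C) / 2 with hεdef
  have hε : 0 < ε := by simp only [hεdef]; linarith
  obtain ⟨x, y, hxM, hyM, hTxM, hTyM, hnx, hny, hxy, hTxy, hTax, hxl, hym⟩ :=
    h ε hε M hMc hMf
  have hyx : (inner ℂ y x : ℂ) = 0 := by rw [← inner_conj_symm, hxy, map_zero]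
  have hyTx : (inner ℂ y (T x) : ℂ) = 0 := by rw [← inner_conj_symm, hTxy, map_zero]
  have hxTy : (inner ℂ x (T y) : ℂ) = 0 := by
    rw [← ContinuousLinearMap.adjoint_inner_left, hTax]
  set α : ℂ := inner ℂ (x - y) (T (x + y)) with hα
  have hαval : α = (inner ℂ x (T x) : ℂ) - inner ℂ y (T y) := by
    simp only [hα, map_add, inner_sub_left, inner_add_right, hxTy, hyTx]
    ring
  have h1 : ‖α - (lam - mu)‖ < 2 * ε := by
    have heq : α - (lam - mu) =
        ((inner ℂ x (T x) : ℂ) - lam) - ((inner ℂ y (T y) : ℂ) - mu) := by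
      rw [hαval]; ring
    calc ‖α - (lam - mu)‖
        ≤ ‖(inner ℂ x (T x) : ℂ) - lam‖ +
          ‖(inner ℂ y (T y) : ℂ) - mu‖ := by
          rw [heq]; exact norm_sub_le _ _
      _ < 2 * ε := by linarith
  have hαbound : C < ‖α‖ := by
    have h2 : ‖lam - mu‖ ≤ ‖α‖ + ‖α - (lam - mu)‖ := by
      calc ‖lam - mu‖ = ‖α - (α - (lam - mu))‖ := by ring_nf
        _ ≤ _ := norm_sub_le _ _
    have : 2 * ε = ‖lam - mu‖ - C := by rw [hεdef]; ring
    linarith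
  have hα0 : α ≠ 0 := by
    intro h0; rw [h0] at hαbound; simp at hαbound; linarith
  refine ⟨α⁻¹ • (x + y), x - y, M.smul_mem _ (M.add_mem hxM hyM), M.sub_mem hxM hyM, ?_, ?_, ?_⟩
  · have hnxy : ‖x + y‖ = Real.sqrt 2 := by
      have hsq : ‖x + y‖ ^ 2 = 2 := by
        rw [@norm_add_sq ℂ]; simp [hxy, hnx, hny]; norm_num
      rw [← Real.sqrt_sq (norm_nonneg (x + y)), hsq]
    have hnxy' : ‖x - y‖ = Real.sqrt 2 := by
      have hsq : ‖x - y‖ ^ 2 = 2 := by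
        rw [@norm_sub_sq ℂ]; simp [hxy, hnx, hny]; norm_num
      rw [← Real.sqrt_sq (norm_nonneg (x - y)), hsq]
    rw [norm_smul, hnxy, hnxy']
    have : ‖α⁻¹‖ * Real.sqrt 2 * Real.sqrt 2 = 2 * ‖α‖⁻¹ := by
      rw [mul_assoc, Real.mul_self_sqrt (by norm_num)]
      simp [mul_comm]
    rw [this]
    have hs : (1 : ℝ) ≤ Real.sqrt 2 := by
      rw [show (1:ℝ) = Real.sqrt 1 by simp]
      exact Real.sqrt_le_sqrt (by norm_num)
    calc 2 * ‖α‖⁻¹ ≤ 2 * C⁻¹ := by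
          have := inv_anti₀ hC0 hαbound.le
          linarith
      _ ≤ 2 * Real.sqrt 2 / C := by
          rw [div_eq_mul_inv]
          gcongr
          linarith
  · simp only [inner_smul_left, inner_add_left, inner_sub_right, hxy, hyx]
    have hx2 : (inner ℂ x x : ℂ) = 1 := by
      rw [inner_self_eq_norm_sq_to_K, hnx]; norm_num
    have hy2 : (inner ℂ y y : ℂ) = 1 := by
      rw [inner_self_eq_norm_sq_to_K, hny]; norm_num
    rw [hx2, hy2]; ring
  · rw [map_smul, inner_smul_right, ← hα, inv_mul_cancel₀ hα0]
end

section
/- Let T ∈ B(H) be an invertible operator, λ ∈ ℂ nonzero, k ∈ ℕ, and suppose (x_n) is a sequence of vectors in H converging weakly to 0 with inf_n ‖x_n‖ > 0 and ‖(T − λ)x_n‖ → 0. Prove that the sequence y_n = λ^k T^k x_n satisfies: inf_n ‖y_n‖ > 0, y_n → 0 weakly, ‖(T^j − λ^j) y_n‖ → 0 for all j = 1,…,k, and ‖(T^{−j} − λ^{−j}) y_n‖ → 0 for all j = 1,…,k. -/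
open Filter Topology ContinuousLinearMap

private lemma squeeze_op {f g : ℕ → ℝ} (C : ℝ) (hf : ∀ n, 0 ≤ f n)
    (hb : ∀ n, f n ≤ C * g n) (hg : Tendsto g atTop (nhds 0)) :
    Tendsto f atTop (nhds 0) :=
  squeeze_zero hf hb (by simpa using hg.const_mul C)

private lemma tendsto_aux {H : Type*} [NormedAddCommGroup H] [NormedSpace ℂ H]
    (A : H →L[ℂ] H) (μ : ℂ) (x : ℕ → H)
    (h : Tendsto (fun n => ‖A (x n) - μ • x n‖) atTop (nhds 0)) (m : ℕ) :
    Tendsto (fun n => ‖(A ^ m) (x n) - μ ^ m • x n‖) atTop (nhds 0) := by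
  induction m with
  | zero => simpa using tendsto_const_nhds
  | succ m ih =>
    have key : ∀ n, (A ^ (m + 1)) (x n) - μ ^ (m + 1) • x n
        = A ((A ^ m) (x n) - μ ^ m • x n) + μ ^ m • (A (x n) - μ • x n) := by
      intro n
      simp only [pow_succ', ContinuousLinearMap.mul_apply, map_sub, map_smul, smul_sub, smul_smul, pow_succ]
      module
    have hb : ∀ n, ‖(A ^ (m + 1)) (x n) - μ ^ (m + 1) • x n‖
        ≤ ‖A‖ * ‖(A ^ m) (x n) - μ ^ m • x n‖ + ‖μ‖ ^ m * ‖A (x n) - μ • x n‖ := by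
      intro n
      rw [key n]
      refine (norm_add_le _ _).trans ?_
      gcongr
      · exact A.le_opNorm _
      · rw [norm_smul, norm_pow]
    refine squeeze_zero (fun n => norm_nonneg _) hb ?_
    simpa using (ih.const_mul ‖A‖).add (h.const_mul (‖μ‖ ^ m))

private lemma symm_comm_pow {H : Type*} [NormedAddCommGroup H] [NormedSpace ℂ H]
    (T : H ≃L[ℂ] H) (k : ℕ) (v : H) :
    (T.symm : H →L[ℂ] H) (((T : H →L[ℂ] H) ^ k) v)
      = ((T : H →L[ℂ] H) ^ k) ((T.symm : H →L[ℂ] H) v) := by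
  induction k with
  | zero => simp
  | succ k ih =>
    rw [pow_succ', ContinuousLinearMap.mul_apply, ContinuousLinearMap.mul_apply]
    simp only [ContinuousLinearEquiv.coe_coe, ContinuousLinearEquiv.symm_apply_apply] at *
    rw [← ih, ContinuousLinearEquiv.apply_symm_apply]

private lemma symm_pow_comm {H : Type*} [NormedAddCommGroup H] [NormedSpace ℂ H]
    (T : H ≃L[ℂ] H) (j k : ℕ) (v : H) :
    ((T.symm : H →L[ℂ] H) ^ j) (((T : H →L[ℂ] H) ^ k) v)
      = ((T : H →L[ℂ] H) ^ k) (((T.symm : H →L[ℂ] H) ^ j) v) := by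
  induction j generalizing v with
  | zero => simp
  | succ j ih => rw [pow_succ, ContinuousLinearMap.mul_apply, ContinuousLinearMap.mul_apply, symm_comm_pow, ih]

private lemma symm_pow_apply_pow {H : Type*} [NormedAddCommGroup H] [NormedSpace ℂ H]
    (T : H ≃L[ℂ] H) (k : ℕ) (v : H) :
    ((T.symm : H →L[ℂ] H) ^ k) (((T : H →L[ℂ] H) ^ k) v) = v := by
  induction k with
  | zero => simp
  | succ k ih =>
    rw [pow_succ' (T : H →L[ℂ] H), ContinuousLinearMap.mul_apply, pow_succ, ContinuousLinearMap.mul_apply]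
    simpa using ih

/-- Key computation of Lemma 6.2: if T is invertible, λ ≠ 0, x_n → 0 weakly with norms
bounded below and ‖(T − λ)x_n‖ → 0, then y_n = λ^k T^k x_n has norms bounded below,
converges weakly to 0, and ‖(T^j − λ^j)y_n‖ → 0 and ‖(T^{−j} − λ^{−j})y_n‖ → 0 for
j = 1,…,k. -/
theorem stmt8 {H : Type*} [NormedAddCommGroup H] [InnerProductSpace ℂ H] [CompleteSpace H]
    (T : H ≃L[ℂ] H) (lam : ℂ) (hlam : lam ≠ 0) (k : ℕ) (hk : 1 ≤ k)
    (x : ℕ → H)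
    (hweak : ∀ w : H, Filter.Tendsto (fun n => (inner ℂ w (x n) : ℂ)) Filter.atTop (nhds 0))
    (hinf : ∃ c > (0 : ℝ), ∀ n, c ≤ ‖x n‖)
    (hconv : Filter.Tendsto (fun n => ‖(T : H →L[ℂ] H) (x n) - lam • x n‖)
      Filter.atTop (nhds 0))
    (y : ℕ → H) (hy : y = fun n => lam ^ k • (((T : H →L[ℂ] H) ^ k) (x n))) :
    (∃ c > (0 : ℝ), ∀ n, c ≤ ‖y n‖) ∧
    (∀ w : H, Filter.Tendsto (fun n => (inner ℂ w (y n) : ℂ)) Filter.atTop (nhds 0)) ∧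
    (∀ j : ℕ, 1 ≤ j → j ≤ k →
      Filter.Tendsto (fun n => ‖((T : H →L[ℂ] H) ^ j) (y n) - lam ^ j • y n‖)
        Filter.atTop (nhds 0)) ∧
    (∀ j : ℕ, 1 ≤ j → j ≤ k →
      Filter.Tendsto (fun n => ‖((T.symm : H →L[ℂ] H) ^ j) (y n) - (lam⁻¹) ^ j • y n‖)
        Filter.atTop (nhds 0)) := by
  set A : H →L[ℂ] H := (T : H →L[ℂ] H) with hA
  set S : H →L[ℂ] H := (T.symm : H →L[ℂ] H) with hS
  obtain ⟨c, hc, hcx⟩ := hinf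
  -- positive powers
  have hpos : ∀ m, Tendsto (fun n => ‖(A ^ m) (x n) - lam ^ m • x n‖) atTop (nhds 0) :=
    tendsto_aux A lam x hconv
  -- negative base case
  have hneg_base : Tendsto (fun n => ‖S (x n) - lam⁻¹ • x n‖) atTop (nhds 0) := by
    have key : ∀ n, S (x n) - lam⁻¹ • x n = (-lam⁻¹) • S (A (x n) - lam • x n) := by
      intro n
      simp only [map_sub, map_smul, smul_sub, smul_smul, hA, hS,
        ContinuousLinearEquiv.coe_coe, ContinuousLinearEquiv.symm_apply_apply]
      rw [neg_mul, inv_mul_cancel₀ hlam]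
      simp [sub_eq_add_neg]
      abel
    refine squeeze_op (‖lam⁻¹‖ * ‖S‖) (fun n => norm_nonneg _) (fun n => ?_) hconv
    rw [key n, norm_smul, norm_neg, mul_assoc]
    gcongr
    exact S.le_opNorm _
  have hneg : ∀ m, Tendsto (fun n => ‖(S ^ m) (x n) - (lam⁻¹) ^ m • x n‖) atTop (nhds 0) :=
    tendsto_aux S lam⁻¹ x hneg_base
  refine ⟨?_, ?_, ?_, ?_⟩
  · -- norms bounded below
    have hxle : ∀ n, ‖x n‖ ≤ ‖S ^ k‖ * ‖(A ^ k) (x n)‖ := by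
      intro n
      calc ‖x n‖ = ‖(S ^ k) ((A ^ k) (x n))‖ := by rw [symm_pow_apply_pow]
        _ ≤ ‖S ^ k‖ * ‖(A ^ k) (x n)‖ := (S ^ k).le_opNorm _
    have hC : 0 < ‖S ^ k‖ := by
      by_contra h
      push_neg at h
      have := (hcx 0).trans (hxle 0)
      nlinarith [norm_nonneg ((A ^ k) (x 0))]
    have hl : (0 : ℝ) < ‖lam‖ := norm_pos_iff.mpr hlam
    refine ⟨‖lam‖ ^ k * (c / ‖S ^ k‖), mul_pos (pow_pos hl k) (div_pos hc hC), fun n => ?_⟩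
    rw [hy]
    simp only [norm_smul, norm_pow]
    gcongr
    rw [div_le_iff₀ hC, mul_comm]
    exact (hcx n).trans (hxle n)
  · -- weak convergence
    intro w
    have heq : (fun n => (inner ℂ w (y n) : ℂ))
        = fun n => lam ^ k * inner ℂ ((adjoint (A ^ k)) w) (x n) := by
      funext n
      rw [hy, inner_smul_right, adjoint_inner_left]
    rw [heq]
    simpa using (hweak ((adjoint (A ^ k)) w)).const_mul (lam ^ k)
  · -- positive powers of y
    intro j hj1 hjk
    have key : ∀ n, (A ^ j) (y n) - lam ^ j • y n
        = lam ^ k • (A ^ k) ((A ^ j) (x n) - lam ^ j • x n) := by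
      intro n
      have hcomm : (A ^ j) ((A ^ k) (x n)) = (A ^ k) ((A ^ j) (x n)) := by
        rw [← ContinuousLinearMap.mul_apply, ← ContinuousLinearMap.mul_apply, pow_mul_comm]
      rw [hy]
      simp only [map_smul, map_sub, smul_sub, hcomm, smul_smul, mul_comm (lam ^ j) (lam ^ k)]
    refine squeeze_op (‖lam‖ ^ k * ‖A ^ k‖) (fun n => norm_nonneg _) (fun n => ?_) (hpos j)
    rw [key n, norm_smul, norm_pow, mul_assoc]
    gcongr
    exact (A ^ k).le_opNorm _
  · -- negative powers of y
    intro j hj1 hjk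
    have key : ∀ n, (S ^ j) (y n) - (lam⁻¹) ^ j • y n
        = lam ^ k • (A ^ k) ((S ^ j) (x n) - (lam⁻¹) ^ j • x n) := by
      intro n
      rw [hy]
      simp only [map_smul, map_sub, smul_sub, smul_smul,
        mul_comm ((lam⁻¹) ^ j) (lam ^ k)]
      rw [symm_pow_comm]
    refine squeeze_op (‖lam‖ ^ k * ‖A ^ k‖) (fun n => norm_nonneg _) (fun n => ?_) (hneg j)
    rw [key n, norm_smul, norm_pow, mul_assoc]
    gcongr
    exact (A ^ k).le_opNorm _
end

section
/- Let H be a Hilbert space, (u_j) a finite orthonormal family, M_{n−1} = span{u₁,…,u_{n−1}} and M_n = span{u₁,…,u_n}. Let y ∈ H and suppose u_n = √(1−η)·v + √η·b where 0 < η < 1, v ⊥ b, ‖v‖ = ‖b‖ = 1, v ⊥ y, and b = (I − P_{M_{n−1}})y / ‖(I − P_{M_{n−1}})y‖ (assuming y ∉ M_{n−1}). Prove that dist²(y, M_n) = (1 − η)·dist²(y, M_{n−1}). -/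
lemma inner_real_smul_left' {H : Type*} [NormedAddCommGroup H] [InnerProductSpace ℂ H]
    (r : ℝ) (x y : H) : (inner ℂ (r • x) y : ℂ) = (r : ℂ) * inner ℂ x y := by
  rw [RCLike.real_smul_eq_coe_smul (K := ℂ), inner_smul_left]
  norm_num

lemma inner_real_smul_right' {H : Type*} [NormedAddCommGroup H] [InnerProductSpace ℂ H]
    (r : ℝ) (x y : H) : (inner ℂ x (r • y) : ℂ) = (r : ℂ) * inner ℂ x y := by
  rw [RCLike.real_smul_eq_coe_smul (K := ℂ), inner_smul_right]
  norm_num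

/-- If `p ∈ K` and `y - p ⊥ K`, then `infDist y K = ‖y - p‖`. -/
lemma infDist_eq_of_perp {H : Type*} [NormedAddCommGroup H] [InnerProductSpace ℂ H]
    {K : Submodule ℂ H} {y p : H} (hp : p ∈ K)
    (h : ∀ x ∈ K, (inner ℂ (y - p) x : ℂ) = 0) :
    Metric.infDist y (K : Set H) = ‖y - p‖ := by
  have := (Submodule.norm_eq_iInf_iff_inner_eq_zero K hp).2 h
  rw [Metric.infDist_eq_iInf, this]
  congr 1
  ext w
  rw [dist_eq_norm]

/-- The distance-decrease computation: if u_n = √(1−η) v + √η b with b the normalized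
projection of y onto the orthocomplement of M_{n−1}, then
dist²(y, M_n) = (1 − η) dist²(y, M_{n−1}). -/
theorem stmt12 {H : Type*} [NormedAddCommGroup H] [InnerProductSpace ℂ H] [CompleteSpace H]
    (n : ℕ) (u : Fin (n + 1) → H) (hON : Orthonormal ℂ u)
    (M' : Submodule ℂ H)
    (hM' : M' = Submodule.span ℂ (Set.range fun i : Fin n => u i.castSucc))
    (Mn : Submodule ℂ H) (hMn : Mn = Submodule.span ℂ (Set.range u))
    (y v b p : H) (η : ℝ) (hη : 0 < η) (hη1 : η < 1)
    (hp : p ∈ M') (hyp : ∀ x ∈ M', (inner ℂ x (y - p) : ℂ) = 0) (hynotin : y ∉ M')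
    (hb : b = ‖y - p‖⁻¹ • (y - p))
    (hv : ‖v‖ = 1) (hvb : (inner ℂ v b : ℂ) = 0) (hvy : (inner ℂ v y : ℂ) = 0)
    (hvM : ∀ x ∈ M', (inner ℂ v x : ℂ) = 0)
    (hu : u (Fin.last n) = (Real.sqrt (1 - η)) • v + (Real.sqrt η) • b) :
    Metric.infDist y (Mn : Set H) ^ 2 = (1 - η) * Metric.infDist y (M' : Set H) ^ 2 := by
  have hyp0 : y - p ≠ 0 := fun h0 => hynotin (by rw [show y = p from sub_eq_zero.1 h0]; exact hp)
  have hnorm_pos : (0:ℝ) < ‖y - p‖ := norm_pos_iff.2 hyp0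
  have hperp' : ∀ x ∈ M', (inner ℂ (y - p) x : ℂ) = 0 := by
    intro x hx
    rw [← inner_conj_symm, hyp x hx, map_zero]
  have hd1 : Metric.infDist y (M' : Set H) = ‖y - p‖ := infDist_eq_of_perp hp hperp'
  set un := u (Fin.last n) with hun
  have hbyp : (inner ℂ b (y - p) : ℂ) = (‖y - p‖ : ℂ) := by
    have hne : (‖y - p‖ : ℂ) ≠ 0 := by exact_mod_cast hnorm_pos.ne'
    rw [hb, inner_real_smul_left', inner_self_eq_norm_sq_to_K]
    push_cast
    rw [pow_two]
    field_simp
    rfl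
  have hbp : (inner ℂ b y : ℂ) = (‖y - p‖ : ℂ) := by
    have h1 : (inner ℂ b p : ℂ) = 0 := by
      rw [hb, inner_real_smul_left', hperp' p hp, mul_zero]
    have h2 : (inner ℂ b y : ℂ) = inner ℂ b (y - p) + inner ℂ b p := by
      rw [← inner_add_right, sub_add_cancel]
    rw [h2, hbyp, h1, add_zero]
  set c : ℝ := Real.sqrt η * ‖y - p‖ with hc
  have huny : (inner ℂ un y : ℂ) = (c : ℂ) := by
    rw [hu, inner_add_left, inner_real_smul_left', inner_real_smul_left', hvy, hbp, hc]
    push_cast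
    ring
  have hunM : ∀ x ∈ M', (inner ℂ un x : ℂ) = 0 := by
    intro x hx
    have hbx : (inner ℂ b x : ℂ) = 0 := by
      rw [hb, inner_real_smul_left', hperp' x hx, mul_zero]
    rw [hu, inner_add_left, inner_real_smul_left', inner_real_smul_left', hvM x hx, hbx]
    simp
  have hun1 : ‖un‖ = 1 := hON.1 _
  set q : H := p + c • un with hq
  have hM'le : M' ≤ Mn := by
    rw [hM', hMn]
    apply Submodule.span_mono
    rintro _ ⟨i, rfl⟩
    exact ⟨i.castSucc, rfl⟩
  have hunMn : un ∈ Mn := by rw [hMn]; exact Submodule.subset_span ⟨Fin.last n, rfl⟩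
  have hqMn : q ∈ Mn := by
    apply Submodule.add_mem _ (hM'le hp)
    rw [RCLike.real_smul_eq_coe_smul (K := ℂ)]
    exact Submodule.smul_mem _ _ hunMn
  have hyq : y - q = (y - p) - c • un := by rw [hq]; abel
  have hperpMn : ∀ x ∈ Mn, (inner ℂ (y - q) x : ℂ) = 0 := by
    have key : ∀ i : Fin (n+1), (inner ℂ (y - q) (u i) : ℂ) = 0 := by
      intro i
      induction i using Fin.lastCases with
      | last =>
        rw [hyq, inner_sub_left, inner_real_smul_left', ← hun]
        have h1 : (inner ℂ (y - p) un : ℂ) = (c : ℂ) := by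
          rw [← inner_conj_symm, inner_sub_right, huny, hunM p hp, sub_zero, Complex.conj_ofReal]
        have h2 : (inner ℂ un un : ℂ) = 1 := by
          rw [inner_self_eq_norm_sq_to_K, hun1]; norm_num
        rw [h1, h2, mul_one, sub_self]
      | cast j =>
        have hmem : u j.castSucc ∈ M' := by
          rw [hM']; exact Submodule.subset_span ⟨j, rfl⟩
        have h1 : (inner ℂ (y - p) (u j.castSucc) : ℂ) = 0 := hperp' _ hmem
        have h2 : (inner ℂ un (u j.castSucc) : ℂ) = 0 := by
          exact hON.2 (Fin.castSucc_lt_last j).ne'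
        rw [hyq, inner_sub_left, inner_real_smul_left', h1, h2, mul_zero, sub_zero]
    intro x hx
    rw [hMn] at hx
    induction hx using Submodule.span_induction with
    | mem x hx => obtain ⟨i, rfl⟩ := hx; exact key i
    | zero => simp
    | add x z hx hz ihx ihz => rw [inner_add_right, ihx, ihz, add_zero]
    | smul a x hx ih => rw [inner_smul_right, ih, mul_zero]
  have hd2 : Metric.infDist y (Mn : Set H) = ‖y - q‖ := infDist_eq_of_perp hqMn hperpMn
  have hdecomp : y - p = (y - q) + c • un := by rw [hq]; abel
  have hper : (inner ℂ (y - q) (c • un) : ℂ) = 0 := by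
    rw [inner_real_smul_right', hperpMn un hunMn, mul_zero]
  have hcnn : (0:ℝ) ≤ c := by positivity
  have hpyth : ‖y - p‖^2 = ‖y - q‖^2 + c^2 := by
    have h := norm_add_sq (𝕜 := ℂ) (y - q) (c • un)
    rw [← hdecomp, hper] at h
    rw [h, norm_smul, hun1]
    simp [abs_of_nonneg hcnn]
  have hc2 : c^2 = η * ‖y - p‖^2 := by
    rw [hc, mul_pow, Real.sq_sqrt hη.le]
  rw [hd1, hd2]
  nlinarith [hpyth, hc2]
end

section
/- Let H be a Hilbert space, T ∈ B(H), M a finite-codimensional subspace, and suppose x, y ∈ M ∩ T⁻¹M are unit vectors with y ⊥ x, y ⊥ Tx, y ⊥ T*x, |⟨Tx,x⟩ − λ| < ε, |⟨Ty,y⟩ − μ| < ε. Let v = (x+y)/√2 and w = Tv − ⟨Tv,v⟩v. Prove that ‖w‖ ≥ (|λ − μ|/2 − 2ε)/√2. -/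
/-- The core estimate in Lemma 4.1: with v = (x+y)/√2 and w = Tv − ⟨Tv,v⟩v one has
‖w‖ ≥ (|λ − μ|/2 − 2ε)/√2. -/
theorem stmt16 {H : Type*} [NormedAddCommGroup H] [InnerProductSpace ℂ H] [CompleteSpace H]
    (T : H →L[ℂ] H) (M : Submodule ℂ H) (lam mu : ℂ) (ε : ℝ) (hε : 0 < ε)
    (x y : H) (hxM : x ∈ M) (hyM : y ∈ M) (hTx : T x ∈ M) (hTy : T y ∈ M)
    (hx : ‖x‖ = 1) (hy : ‖y‖ = 1)
    (hxy : (inner ℂ x y : ℂ) = 0) (hTxy : (inner ℂ (T x) y : ℂ) = 0)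
    (hTsxy : (inner ℂ ((ContinuousLinearMap.adjoint T) x) y : ℂ) = 0)
    (hl : ‖(inner ℂ x (T x) : ℂ) - lam‖ < ε)
    (hm : ‖(inner ℂ y (T y) : ℂ) - mu‖ < ε)
    (v w : H) (hv : v = (Real.sqrt 2)⁻¹ • (x + y))
    (hw : w = T v - (inner ℂ v (T v) : ℂ) • v) :
    (‖lam - mu‖ / 2 - 2 * ε) / Real.sqrt 2 ≤ ‖w‖ := by
  set a : ℂ := inner ℂ x (T x) with ha
  set b : ℂ := inner ℂ y (T y) with hb
  set c : ℂ := ((Real.sqrt 2 : ℂ))⁻¹ with hc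
  have hs2 : (0:ℝ) < Real.sqrt 2 := by positivity
  have hv' : v = c • (x + y) := by
    rw [hv, hc, RCLike.real_smul_eq_coe_smul (K := ℂ)]
    norm_cast
  have hcc : c * c = (2:ℂ)⁻¹ := by
    rw [hc, ← mul_inv, ← Complex.ofReal_mul, Real.mul_self_sqrt (by norm_num)]
    norm_num
  have hconj : (starRingEnd ℂ) c = c := by
    rw [hc, map_inv₀, Complex.conj_ofReal]
  have hxx : (inner ℂ x x : ℂ) = 1 := by
    rw [inner_self_eq_norm_sq_to_K, hx]; norm_num
  have hyx : (inner ℂ y x : ℂ) = 0 := by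
    rwa [← inner_eq_zero_symm]
  have hyTx : (inner ℂ y (T x) : ℂ) = 0 := by
    rwa [← inner_eq_zero_symm]
  have hxTy : (inner ℂ x (T y) : ℂ) = 0 := by
    rwa [ContinuousLinearMap.adjoint_inner_left] at hTsxy
  have hTv : T v = c • (T x + T y) := by rw [hv', map_smul, map_add]
  have hxv : (inner ℂ x v : ℂ) = c := by
    rw [hv', inner_smul_right, inner_add_right, hxx, hxy]; ring
  have hxTvv : (inner ℂ x (T v) : ℂ) = c * a := by
    rw [hTv, inner_smul_right, inner_add_right, hxTy]; ring
  have hvTv : (inner ℂ v (T v) : ℂ) = c * c * (a + b) := by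
    rw [hv', map_smul, map_add, inner_smul_left, inner_smul_right, hconj,
      inner_add_left, inner_add_right, inner_add_right, hxTy, hyTx]
    ring
  have hxw : (inner ℂ x w : ℂ) = c * (a - b) * (2:ℂ)⁻¹ := by
    rw [hw, inner_sub_right, inner_smul_right, hxTvv, hvTv, hxv]
    rw [show c * c * (a + b) * c = (c*c) * (a+b) * c by ring, hcc]
    ring
  have habs : ‖(inner ℂ x w : ℂ)‖ = ‖a - b‖ / (2 * Real.sqrt 2) := by
    rw [hxw, norm_mul, norm_mul, hc, norm_inv, norm_inv, Complex.norm_real,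
      Real.norm_eq_abs, abs_of_pos hs2, Complex.norm_two]
    ring
  have hle : ‖(inner ℂ x w : ℂ)‖ ≤ ‖w‖ := by
    have := norm_inner_le_norm (𝕜 := ℂ) x w
    rwa [hx, one_mul] at this
  have htri : ‖lam - mu‖ ≤ ‖a - b‖ + 2 * ε := by
    have e : lam - mu = (a - b) - (a - lam) + (b - mu) := by ring
    rw [e]
    calc ‖(a - b) - (a - lam) + (b - mu)‖
        ≤ ‖(a - b) - (a - lam)‖ + ‖b - mu‖ := norm_add_le _ _
      _ ≤ ‖a - b‖ + ‖a - lam‖ + ‖b - mu‖ := by linarith [norm_sub_le (a-b) (a-lam)]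
      _ ≤ ‖a - b‖ + 2 * ε := by linarith
  have key : (‖lam - mu‖ / 2 - 2 * ε) / Real.sqrt 2
      ≤ ‖a - b‖ / (2 * Real.sqrt 2) := by
    rw [div_le_div_iff₀ hs2 (by positivity)]
    nlinarith [hs2, norm_nonneg (a-b)]
  linarith [habs ▸ hle]
end
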